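/- Let J : (0, ∞) → ℝ be C¹ with J(U) > 0 and J'(U) ≤ 0 for all U > 0. For P > 0 let U_P solve U'' = −J(U), U(0) = 0, U'(0) = P, and let x(P) > 0 be the smallest positive point with U_P'(x(P)) = 0 (assumed to exist for P in the relevant range, with U_P > 0 and increasing on (0, x(P))). Then x(P) is strictly increasing in P: if 0 < P₁ < P₂ and both x(P₁), x(P₂) exist, then x(P₁) < x(P₂). -/

import Mathlib

theorem stmt15 (J : ℝ → ℝ)
    (hJdiff : DifferentiableOn ℝ J (Set.Ioi 0))
    (hJpos : ∀ U > 0, 0 < J U)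
    (hJ' : ∀ U > 0, deriv J U ≤ 0)
    (P₁ P₂ x₁ x₂ : ℝ) (U₁ U₂ : ℝ → ℝ)
    (hP : 0 < P₁) (hPP : P₁ < P₂)
    (hU₁ : ContDiff ℝ 2 U₁) (hU₂ : ContDiff ℝ 2 U₂)
    (heq₁ : ∀ x ∈ Set.Icc 0 x₁, deriv (deriv U₁) x = -J (U₁ x))
    (heq₂ : ∀ x ∈ Set.Icc 0 x₂, deriv (deriv U₂) x = -J (U₂ x))
    (h₁0 : U₁ 0 = 0) (h₂0 : U₂ 0 = 0)
    (h₁0' : deriv U₁ 0 = P₁) (h₂0' : deriv U₂ 0 = P₂)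
    (hx₁ : 0 < x₁) (hx₂ : 0 < x₂)
    (hc₁ : deriv U₁ x₁ = 0) (hc₂ : deriv U₂ x₂ = 0)
    (hmono₁ : ∀ x ∈ Set.Ioo 0 x₁, 0 < U₁ x ∧ 0 < deriv U₁ x)
    (hmono₂ : ∀ x ∈ Set.Ioo 0 x₂, 0 < U₂ x ∧ 0 < deriv U₂ x) :
    x₁ < x₂ := by
  by_contra hcon
  push_neg at hcon
  -- hcon : x₂ ≤ x₁
  -- differentiability facts
  have hd₁ : Differentiable ℝ (deriv U₁) := by
    have := (contDiff_succ_iff_deriv.mp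
      (by exact_mod_cast hU₁ : ContDiff ℝ ((1:ℕ)+1) U₁)).2.2
    exact this.differentiable (by norm_num)
  have hd₂ : Differentiable ℝ (deriv U₂) := by
    have := (contDiff_succ_iff_deriv.mp
      (by exact_mod_cast hU₂ : ContDiff ℝ ((1:ℕ)+1) U₂)).2.2
    exact this.differentiable (by norm_num)
  have hD₁ : Differentiable ℝ U₁ := hU₁.differentiable (by norm_num)
  have hD₂ : Differentiable ℝ U₂ := hU₂.differentiable (by norm_num)
  -- J is antitone on (0, ∞)
  have hJanti : AntitoneOn J (Set.Ioi 0) := by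
    apply antitoneOn_of_deriv_nonpos (convex_Ioi 0) hJdiff.continuousOn
    · rw [interior_Ioi]; exact hJdiff
    · rw [interior_Ioi]; exact fun x hx => hJ' x hx
  -- g = deriv U₂ - deriv U₁
  set g : ℝ → ℝ := fun x => deriv U₂ x - deriv U₁ x with hgdef
  have hgcont : Continuous g := (hd₂.continuous).sub (hd₁.continuous)
  have hg0 : g 0 = P₂ - P₁ := by simp [hgdef, h₁0', h₂0']
  have hg0pos : 0 < g 0 := by rw [hg0]; linarith
  -- g x₂ ≤ 0
  have hgx₂ : g x₂ ≤ 0 := by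
    rcases eq_or_lt_of_le hcon with h | h
    · simp only [hgdef]; rw [hc₂, h, hc₁]; norm_num
    · have := (hmono₁ x₂ ⟨hx₂, h⟩).2
      simp only [hgdef, hc₂]
      linarith
  -- S : set where g ≤ 0 within [0, x₂]
  set S : Set ℝ := Set.Icc 0 x₂ ∩ g ⁻¹' Set.Iic 0 with hSdef
  have hScompact : IsCompact S :=
    (isCompact_Icc).inter_right (isClosed_Iic.preimage hgcont)
  have hSne : S.Nonempty := ⟨x₂, ⟨le_of_lt hx₂, le_refl x₂⟩, hgx₂⟩
  have htmem : sInf S ∈ S := hScompact.sInf_mem hSne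
  set t : ℝ := sInf S with htdef
  obtain ⟨⟨ht0, htx₂⟩, hgt⟩ := htmem
  have hgt : g t ≤ 0 := hgt
  have htpos : 0 < t := by
    rcases eq_or_lt_of_le ht0 with h | h
    · exfalso; rw [← h] at hgt; linarith
    · exact h
  have hSbdd : BddBelow S := ⟨0, fun x hx => hx.1.1⟩
  -- g > 0 on [0, t)
  have hgpos : ∀ x ∈ Set.Ico 0 t, 0 < g x := by
    intro x ⟨hx0, hxt⟩
    by_contra hle
    push_neg at hle
    have hxS : x ∈ S := ⟨⟨hx0, le_trans (le_of_lt hxt) htx₂⟩, hle⟩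
    have := csInf_le hSbdd hxS
    linarith
  -- U₂ - U₁ is monotone on [0, t]
  have hhmono : MonotoneOn (fun x => U₂ x - U₁ x) (Set.Icc 0 t) := by
    apply monotoneOn_of_deriv_nonneg (convex_Icc 0 t)
      ((hD₂.continuous.sub hD₁.continuous).continuousOn)
      ((hD₂.sub hD₁).differentiableOn)
    intro x hx
    rw [interior_Icc] at hx
    rw [deriv_sub (hD₂ x) (hD₁ x)]
    have := hgpos x ⟨le_of_lt hx.1, hx.2⟩
    simp only [hgdef] at this
    linarith
  -- hence U₁ x ≤ U₂ x on [0,t]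
  have hUle : ∀ x ∈ Set.Icc 0 t, U₁ x ≤ U₂ x := by
    intro x hx
    have := hhmono (Set.left_mem_Icc.mpr (le_of_lt htpos)) hx hx.1
    simp [h₁0, h₂0] at this
    linarith
  -- g is monotone on [0, t]
  have hgmono : MonotoneOn g (Set.Icc 0 t) := by
    apply monotoneOn_of_deriv_nonneg (convex_Icc 0 t) hgcont.continuousOn
      ((hd₂.sub hd₁).differentiableOn)
    intro x hx
    rw [interior_Icc] at hx
    have hxx₂ : x ∈ Set.Icc 0 x₂ := ⟨le_of_lt hx.1, le_trans (le_of_lt hx.2) htx₂⟩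
    have hxx₁ : x ∈ Set.Icc 0 x₁ := ⟨le_of_lt hx.1, le_trans hxx₂.2 hcon⟩
    have hU₁pos : 0 < U₁ x := by
      refine (hmono₁ x ⟨hx.1, ?_⟩).1
      exact lt_of_lt_of_le (lt_of_lt_of_le hx.2 htx₂) hcon
    have hU₂pos : 0 < U₂ x :=
      lt_of_lt_of_le hU₁pos (hUle x ⟨le_of_lt hx.1, le_of_lt hx.2⟩)
    have hJle : J (U₂ x) ≤ J (U₁ x) :=
      hJanti hU₁pos hU₂pos (hUle x ⟨le_of_lt hx.1, le_of_lt hx.2⟩)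
    rw [show g = fun x => deriv U₂ x - deriv U₁ x from rfl]
    rw [deriv_fun_sub (hd₂ x) (hd₁ x), heq₂ x hxx₂, heq₁ x hxx₁]
    linarith
  -- contradiction : g t ≥ g 0 > 0
  have := hgmono (Set.left_mem_Icc.mpr (le_of_lt htpos))
    (Set.right_mem_Icc.mpr (le_of_lt htpos)) (le_of_lt htpos)
  linarith
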